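/- Let F(u,v) be the free group on u, v and B = u v u v⁻¹. For every integer k ≥ 1, the commutator [v^{2k}, u] = v^{2k} u v^{-2k} u⁻¹ equals ∏_{i=1}^{k} (B_{2k-2i+1, -1} · B_{2k-2i, 0}⁻¹), where B_{p,q} = v^p u^q B u^{-q} v^{-p} and the product is in order of increasing i. -/

import Mathlib

namespace KleinBU

/-- Generator `u` of the free group `F(u,v)`. -/
def u : FreeGroup Bool := FreeGroup.of true

/-- Generator `v` of the free group `F(u,v)`. -/
def v : FreeGroup Bool := FreeGroup.of false

/-- The element `B = u v u v⁻¹`. -/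
def Bel : FreeGroup Bool := u * v * u * v⁻¹

/-- The element `B_{k,l} = v^k u^l B u^{-l} v^{-k}`. -/
def Bkl (k l : ℤ) : FreeGroup Bool := v ^ k * u ^ l * Bel * u ^ (-l) * v ^ (-k)

theorem aux (n : ℕ) :
    v ^ (2 * ((n : ℤ) + 1)) * u * v ^ (-(2 * ((n : ℤ) + 1))) * u⁻¹
      = ((List.range (n + 1)).map (fun i : ℕ =>
          Bkl (2 * ((n : ℤ) + 1) - 2 * (i : ℤ) - 1) (-1)
            * (Bkl (2 * ((n : ℤ) + 1) - 2 * (i : ℤ) - 2) 0)⁻¹)).prod := by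
  induction n with
  | zero =>
      norm_num [List.range_succ, Bkl, Bel]
      decide
  | succ n ih =>
      rw [List.range_succ_eq_map, List.map_cons, List.prod_cons, List.map_map]
      have hmap : ((List.range (n + 1)).map
          ((fun i : ℕ => Bkl (2 * (((n : ℤ) + 1) + 1) - 2 * (i : ℤ) - 1) (-1)
              * (Bkl (2 * (((n : ℤ) + 1) + 1) - 2 * (i : ℤ) - 2) 0)⁻¹) ∘ Nat.succ))
          = (List.range (n + 1)).map (fun i : ℕ =>
              Bkl (2 * ((n : ℤ) + 1) - 2 * (i : ℤ) - 1) (-1)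
                * (Bkl (2 * ((n : ℤ) + 1) - 2 * (i : ℤ) - 2) 0)⁻¹) := by
        apply List.map_congr_left
        intro i _
        simp only [Function.comp_apply, Nat.succ_eq_add_one]
        push_cast
        ring_nf
      push_cast
      push_cast at hmap ih
      rw [hmap, ← ih]
      simp only [Bkl, Bel]
      group

end KleinBU

open KleinBU in
/-- For `k ≥ 1`, the commutator `[v^{2k}, u] = v^{2k} u v^{-2k} u⁻¹` equals the ordered
product `∏_{i=1}^{k} (B_{2k-2i+1, -1} · B_{2k-2i, 0}⁻¹)`. -/
theorem comm_v2k_u_eq_prod (k : ℤ) (hk : 1 ≤ k) :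
    v ^ (2 * k) * u * v ^ (-(2 * k)) * u⁻¹
      = ((List.range k.toNat).map (fun i =>
          Bkl (2 * k - 2 * (i : ℤ) - 1) (-1) * (Bkl (2 * k - 2 * (i : ℤ) - 2) 0)⁻¹)).prod := by
  obtain ⟨n, hn⟩ : ∃ n : ℕ, k = (n : ℤ) + 1 := ⟨(k - 1).toNat, by omega⟩
  subst hn
  have h : ((n : ℤ) + 1).toNat = n + 1 := by omega
  rw [h]
  have hco : ((do let a ← List.range (n + 1); pure ((a : ℤ))) : List ℤ)
      = (List.range (n + 1)).map (fun a : ℕ => (a : ℤ)) :=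
    List.map_eq_flatMap.symm
  rw [hco, List.map_map]
  simpa [Function.comp_def] using aux n
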